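/- Let F be a field with characteristic not equal to 2. Then for every element x of F there exist a, b, c, d in F with a + b + c + d = x and a·b·c·d = x. -/

import Mathlib

theorem stmt7 (F : Type*) [Field F] (h2 : ringChar F ≠ 2) (x : F) :
    ∃ a b c d : F, a + b + c + d = x ∧ a * b * c * d = x := by
  have two : (2 : F) ≠ 0 := Ring.two_ne_zero h2
  by_cases hx1 : x = 1
  · subst hx1
    by_cases h3 : (3 : F) = 0
    · exact ⟨1, 1, 1, 1, by linear_combination h3, by ring⟩
    · have h8 : (8 : F) ≠ 0 := by
        have := pow_ne_zero 3 two; norm_num at this; exact this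
      have h576 : (576 : F) ≠ 0 := by
        have h64 : (64 : F) ≠ 0 := by
          have := pow_ne_zero 6 two; norm_num at this; exact this
        have h9 : (9 : F) ≠ 0 := by
          have := pow_ne_zero 2 h3; norm_num at this; exact this
        have : (576 : F) = 64 * 9 := by norm_num
        rw [this]; exact mul_ne_zero h64 h9
      refine ⟨8/3, -(8/3), 9/8, -(1/8), ?_, ?_⟩ <;> field_simp <;> norm_num
  · by_cases hxm1 : x = -1
    · subst hxm1
      refine ⟨2, -2, -(1/2), -(1/2), ?_, ?_⟩ <;> field_simp <;> ring
    · have ha : x - 1 ≠ 0 := sub_ne_zero.mpr hx1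
      have hb : (1 : F) + x ≠ 0 := by
        intro h; exact hxm1 (by linear_combination h)
      have ha' : (1 : F) - x ≠ 0 := by
        intro h; exact hx1 (by linear_combination -h)
      have hc : (1 : F) - x^2 ≠ 0 := by
        have : (1 : F) - x^2 = (1-x)*(1+x) := by ring
        rw [this]; exact mul_ne_zero ha' hb
      have hd : (-4 + (x^2*8 - x^4*4) : F) ≠ 0 := by
        have h4 : (4 : F) ≠ 0 := by
          have := pow_ne_zero 2 two; norm_num at this; exact this
        have : (-4 + (x^2*8 - x^4*4) : F) = -(4*(1-x^2)^2) := by ring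
        rw [this]
        simpa using mul_ne_zero h4 (pow_ne_zero 2 hc)
      refine ⟨(x+1)^2/(2*(x-1)), (x-1)/2, (1-x)/(1+x), 4*x/(1-x^2), ?_, ?_⟩ <;>
        field_simp [hd] <;> linear_combination
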